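/- arXiv:1911.00487 — 3 statements merged into one kernel-verified Lean document; each statement's English description precedes it below -/
import Mathlib

section
/- Let A, B, C be three families of subsets of a ground set [n] such that each family consists of at least seven pairwise disjoint non-empty sets. Then there exist A ∈ A, B ∈ B, C ∈ C such that A∖(B∪C), B∖(A∪C), and C∖(A∪B) are all non-empty. -/
/-- Given three families on `Fin n`, each consisting of at least seven pairwise disjoint
non-empty sets, one can pick one set from each family so that each picked set has a point
outside the union of the other two. -/
theorem stmt_4 (n : ℕ) (𝒜 ℬ 𝒞 : Finset (Finset (Fin n)))
    (hA : 7 ≤ 𝒜.card) (hB : 7 ≤ ℬ.card) (hC : 7 ≤ 𝒞.card)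
    (hAne : ∀ A ∈ 𝒜, A.Nonempty) (hBne : ∀ B ∈ ℬ, B.Nonempty) (hCne : ∀ C ∈ 𝒞, C.Nonempty)
    (hAdisj : ∀ A₁ ∈ 𝒜, ∀ A₂ ∈ 𝒜, A₁ ≠ A₂ → Disjoint A₁ A₂)
    (hBdisj : ∀ B₁ ∈ ℬ, ∀ B₂ ∈ ℬ, B₁ ≠ B₂ → Disjoint B₁ B₂)
    (hCdisj : ∀ C₁ ∈ 𝒞, ∀ C₂ ∈ 𝒞, C₁ ≠ C₂ → Disjoint C₁ C₂) :
    ∃ A ∈ 𝒜, ∃ B ∈ ℬ, ∃ C ∈ 𝒞,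
      (A \ (B ∪ C)).Nonempty ∧ (B \ (A ∪ C)).Nonempty ∧ (C \ (A ∪ B)).Nonempty := by
  classical
  obtain ⟨A0, hA0⟩ := Finset.card_pos.mp (by omega : 0 < 𝒜.card)
  obtain ⟨x0, _⟩ := hAne A0 hA0
  haveI : Inhabited (Fin n) := ⟨x0⟩
  -- representative point of a set
  let rep : Finset (Fin n) → Fin n := fun S => if h : S.Nonempty then h.choose else default
  have hrepmem : ∀ S : Finset (Fin n), S.Nonempty → rep S ∈ S := by
    intro S h
    simp only [rep, dif_pos h]
    exact h.choose_spec
  -- uniqueness within each family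
  have uniq : ∀ (𝒳 : Finset (Finset (Fin n))),
      (∀ X₁ ∈ 𝒳, ∀ X₂ ∈ 𝒳, X₁ ≠ X₂ → Disjoint X₁ X₂) →
      ∀ (x : Fin n), ∀ X₁ ∈ 𝒳, ∀ X₂ ∈ 𝒳, x ∈ X₁ → x ∈ X₂ → X₁ = X₂ := by
    intro 𝒳 hd x X₁ h₁ X₂ h₂ hx₁ hx₂
    by_contra hne
    exact (Finset.disjoint_left.mp (hd X₁ h₁ X₂ h₂ hne) hx₁) hx₂
  set s : Finset (Finset (Fin n) × (Finset (Fin n) × Finset (Fin n))) := 𝒜 ×ˢ (ℬ ×ˢ 𝒞) with hs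
  let p₁ : Finset (Fin n) × Finset (Fin n) × Finset (Fin n) → Prop := fun t => rep t.1 ∈ t.2.1
  let p₂ : Finset (Fin n) × Finset (Fin n) × Finset (Fin n) → Prop := fun t => rep t.1 ∈ t.2.2
  let p₃ : Finset (Fin n) × Finset (Fin n) × Finset (Fin n) → Prop := fun t => rep t.2.1 ∈ t.1
  let p₄ : Finset (Fin n) × Finset (Fin n) × Finset (Fin n) → Prop := fun t => rep t.2.1 ∈ t.2.2
  let p₅ : Finset (Fin n) × Finset (Fin n) × Finset (Fin n) → Prop := fun t => rep t.2.2 ∈ t.1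
  let p₆ : Finset (Fin n) × Finset (Fin n) × Finset (Fin n) → Prop := fun t => rep t.2.2 ∈ t.2.1
  have memdec : ∀ t ∈ s, t.1 ∈ 𝒜 ∧ t.2.1 ∈ ℬ ∧ t.2.2 ∈ 𝒞 := by
    intro t ht
    rw [hs, Finset.mem_product] at ht
    rw [Finset.mem_product] at ht
    exact ⟨ht.1, ht.2.1, ht.2.2⟩
  -- bounds on each bad event
  have h1 : (s.filter p₁).card ≤ 𝒜.card * 𝒞.card := by
    have := Finset.card_le_card_of_injOn (f := fun t => (t.1, t.2.2))
      (s := s.filter p₁) (t := 𝒜 ×ˢ 𝒞) ?_ ?_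
    · simpa [Finset.card_product] using this
    · intro t ht
      obtain ⟨h₁, _, h₃⟩ := memdec t (Finset.mem_of_mem_filter t ht)
      exact Finset.mem_product.mpr ⟨h₁, h₃⟩
    · intro t ht t' ht' heq
      obtain ⟨ha, hb, hc⟩ := memdec t (Finset.mem_of_mem_filter t ht)
      obtain ⟨ha', hb', hc'⟩ := memdec t' (Finset.mem_of_mem_filter t' ht')
      have hp := (Finset.mem_filter.mp ht).2
      have hp' := (Finset.mem_filter.mp ht').2
      have e1 : t.1 = t'.1 := by simpa using congrArg Prod.fst heq
      have e3 : t.2.2 = t'.2.2 := by simpa using congrArg Prod.snd heq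
      have e2 : t.2.1 = t'.2.1 := by
        apply uniq ℬ hBdisj (rep t.1) _ hb _ hb' hp
        rw [e1]; exact hp'
      exact Prod.ext e1 (Prod.ext e2 e3)
  have h2 : (s.filter p₂).card ≤ 𝒜.card * ℬ.card := by
    have := Finset.card_le_card_of_injOn (f := fun t => (t.1, t.2.1))
      (s := s.filter p₂) (t := 𝒜 ×ˢ ℬ) ?_ ?_
    · simpa [Finset.card_product] using this
    · intro t ht
      obtain ⟨h₁, h₂, _⟩ := memdec t (Finset.mem_of_mem_filter t ht)
      exact Finset.mem_product.mpr ⟨h₁, h₂⟩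
    · intro t ht t' ht' heq
      obtain ⟨ha, hb, hc⟩ := memdec t (Finset.mem_of_mem_filter t ht)
      obtain ⟨ha', hb', hc'⟩ := memdec t' (Finset.mem_of_mem_filter t' ht')
      have hp := (Finset.mem_filter.mp ht).2
      have hp' := (Finset.mem_filter.mp ht').2
      have e1 : t.1 = t'.1 := by simpa using congrArg Prod.fst heq
      have e2 : t.2.1 = t'.2.1 := by simpa using congrArg Prod.snd heq
      have e3 : t.2.2 = t'.2.2 := by
        apply uniq 𝒞 hCdisj (rep t.1) _ hc _ hc' hp
        rw [e1]; exact hp'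
      exact Prod.ext e1 (Prod.ext e2 e3)
  have h3 : (s.filter p₃).card ≤ ℬ.card * 𝒞.card := by
    have := Finset.card_le_card_of_injOn (f := fun t => t.2)
      (s := s.filter p₃) (t := ℬ ×ˢ 𝒞) ?_ ?_
    · simpa [Finset.card_product] using this
    · intro t ht
      obtain ⟨_, h₂, h₃⟩ := memdec t (Finset.mem_of_mem_filter t ht)
      exact Finset.mem_product.mpr ⟨h₂, h₃⟩
    · intro t ht t' ht' heq
      obtain ⟨ha, hb, hc⟩ := memdec t (Finset.mem_of_mem_filter t ht)
      obtain ⟨ha', hb', hc'⟩ := memdec t' (Finset.mem_of_mem_filter t' ht')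
      have hp := (Finset.mem_filter.mp ht).2
      have hp' := (Finset.mem_filter.mp ht').2
      have e2 : t.2 = t'.2 := heq
      have e1 : t.1 = t'.1 := by
        apply uniq 𝒜 hAdisj (rep t.2.1) _ ha _ ha' hp
        rw [e2]; exact hp'
      exact Prod.ext e1 e2
  have h4 : (s.filter p₄).card ≤ 𝒜.card * ℬ.card := by
    have := Finset.card_le_card_of_injOn (f := fun t => (t.1, t.2.1))
      (s := s.filter p₄) (t := 𝒜 ×ˢ ℬ) ?_ ?_
    · simpa [Finset.card_product] using this
    · intro t ht
      obtain ⟨h₁, h₂, _⟩ := memdec t (Finset.mem_of_mem_filter t ht)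
      exact Finset.mem_product.mpr ⟨h₁, h₂⟩
    · intro t ht t' ht' heq
      obtain ⟨ha, hb, hc⟩ := memdec t (Finset.mem_of_mem_filter t ht)
      obtain ⟨ha', hb', hc'⟩ := memdec t' (Finset.mem_of_mem_filter t' ht')
      have hp := (Finset.mem_filter.mp ht).2
      have hp' := (Finset.mem_filter.mp ht').2
      have e1 : t.1 = t'.1 := by simpa using congrArg Prod.fst heq
      have e2 : t.2.1 = t'.2.1 := by simpa using congrArg Prod.snd heq
      have e3 : t.2.2 = t'.2.2 := by
        apply uniq 𝒞 hCdisj (rep t.2.1) _ hc _ hc' hp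
        rw [e2]; exact hp'
      exact Prod.ext e1 (Prod.ext e2 e3)
  have h5 : (s.filter p₅).card ≤ ℬ.card * 𝒞.card := by
    have := Finset.card_le_card_of_injOn (f := fun t => t.2)
      (s := s.filter p₅) (t := ℬ ×ˢ 𝒞) ?_ ?_
    · simpa [Finset.card_product] using this
    · intro t ht
      obtain ⟨_, h₂, h₃⟩ := memdec t (Finset.mem_of_mem_filter t ht)
      exact Finset.mem_product.mpr ⟨h₂, h₃⟩
    · intro t ht t' ht' heq
      obtain ⟨ha, hb, hc⟩ := memdec t (Finset.mem_of_mem_filter t ht)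
      obtain ⟨ha', hb', hc'⟩ := memdec t' (Finset.mem_of_mem_filter t' ht')
      have hp := (Finset.mem_filter.mp ht).2
      have hp' := (Finset.mem_filter.mp ht').2
      have e2 : t.2 = t'.2 := heq
      have e1 : t.1 = t'.1 := by
        apply uniq 𝒜 hAdisj (rep t.2.2) _ ha _ ha' hp
        rw [e2]; exact hp'
      exact Prod.ext e1 e2
  have h6 : (s.filter p₆).card ≤ 𝒜.card * 𝒞.card := by
    have := Finset.card_le_card_of_injOn (f := fun t => (t.1, t.2.2))
      (s := s.filter p₆) (t := 𝒜 ×ˢ 𝒞) ?_ ?_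
    · simpa [Finset.card_product] using this
    · intro t ht
      obtain ⟨h₁, _, h₃⟩ := memdec t (Finset.mem_of_mem_filter t ht)
      exact Finset.mem_product.mpr ⟨h₁, h₃⟩
    · intro t ht t' ht' heq
      obtain ⟨ha, hb, hc⟩ := memdec t (Finset.mem_of_mem_filter t ht)
      obtain ⟨ha', hb', hc'⟩ := memdec t' (Finset.mem_of_mem_filter t' ht')
      have hp := (Finset.mem_filter.mp ht).2
      have hp' := (Finset.mem_filter.mp ht').2
      have e1 : t.1 = t'.1 := by simpa using congrArg Prod.fst heq
      have e3 : t.2.2 = t'.2.2 := by simpa using congrArg Prod.snd heq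
      have e2 : t.2.1 = t'.2.1 := by
        apply uniq ℬ hBdisj (rep t.2.2) _ hb _ hb' hp
        rw [e3]; exact hp'
      exact Prod.ext e1 (Prod.ext e2 e3)
  -- the bad set is small
  have hbadsub : s.filter (fun t => p₁ t ∨ p₂ t ∨ p₃ t ∨ p₄ t ∨ p₅ t ∨ p₆ t) ⊆
      s.filter p₁ ∪ s.filter p₂ ∪ s.filter p₃ ∪ s.filter p₄ ∪ s.filter p₅ ∪ s.filter p₆ := by
    intro t ht
    rw [Finset.mem_filter] at ht
    obtain ⟨hts, hcase⟩ := ht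
    simp only [Finset.mem_union, Finset.mem_filter]
    tauto
  have hbadcard : (s.filter (fun t => p₁ t ∨ p₂ t ∨ p₃ t ∨ p₄ t ∨ p₅ t ∨ p₆ t)).card <
      s.card := by
    have hsc : s.card = 𝒜.card * (ℬ.card * 𝒞.card) := by
      rw [hs, Finset.card_product, Finset.card_product]
    have hle := Finset.card_le_card hbadsub
    have hle2 := le_trans hle (le_trans (Finset.card_union_le _ _)
      (add_le_add (le_trans (Finset.card_union_le _ _)
        (add_le_add (le_trans (Finset.card_union_le _ _)
          (add_le_add (le_trans (Finset.card_union_le _ _)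
            (add_le_add (le_trans (Finset.card_union_le _ _)
              (add_le_add h1 h2)) h3)) h4)) h5)) h6))
    rw [hsc]
    set a := 𝒜.card
    set b := ℬ.card
    set c := 𝒞.card
    nlinarith [hle2, hA, hB, hC, mul_le_mul' hA (le_refl (b*c))]
  -- hence a good triple exists
  have hgood : (s.filter (fun t => ¬ (p₁ t ∨ p₂ t ∨ p₃ t ∨ p₄ t ∨ p₅ t ∨ p₆ t))).Nonempty := by
    rw [← Finset.card_pos]
    have := Finset.card_filter_add_card_filter_not
      (s := s) (p := fun t => p₁ t ∨ p₂ t ∨ p₃ t ∨ p₄ t ∨ p₅ t ∨ p₆ t)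
    omega
  obtain ⟨⟨A, B, C⟩, ht⟩ := hgood
  rw [Finset.mem_filter] at ht
  obtain ⟨hts, hngood⟩ := ht
  obtain ⟨hAm, hBm, hCm⟩ := memdec _ hts
  push_neg at hngood
  obtain ⟨q₁, q₂, q₃, q₄, q₅, q₆⟩ := hngood
  refine ⟨A, hAm, B, hBm, C, hCm, ?_, ?_, ?_⟩
  · exact ⟨rep A, Finset.mem_sdiff.mpr ⟨hrepmem A (hAne A hAm),
      by simp only [Finset.mem_union]; tauto⟩⟩
  · exact ⟨rep B, Finset.mem_sdiff.mpr ⟨hrepmem B (hBne B hBm),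
      by simp only [Finset.mem_union]; tauto⟩⟩
  · exact ⟨rep C, Finset.mem_sdiff.mpr ⟨hrepmem C (hCne C hCm),
      by simp only [Finset.mem_union]; tauto⟩⟩
end

section
/- Let F₁, F₂ ⊆ [n] form a crossing pair with regions A = F₁∩F₂, B = F₁∖F₂, C = F₂∖F₁, D = [n]∖(F₁∪F₂), all non-empty. If a family F containing F₁, F₂ has no three sets whose Venn diagram has at least five of the seven inner regions non-empty, then every other set F₃ ∈ F properly splits at most one of the four regions A, B, C, D, where F₃ properly splits T if both F₃∩T and T∖F₃ are non-empty. -/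
set_option maxHeartbeats 1000000

/-- The Boolean region of the 3-Venn diagram of `A, B, C` with sign pattern `p`. -/
def vennRegion {n : ℕ} (A B C : Finset (Fin n)) (p : Bool × Bool × Bool) : Finset (Fin n) :=
  (if p.1 then A else Aᶜ) ∩ (if p.2.1 then B else Bᶜ) ∩ (if p.2.2 then C else Cᶜ)

/-- The number of non-empty regions among the seven inner regions (all Boolean regions
except the outermost one) of the Venn diagram of `A, B, C`. -/
def innerCount {n : ℕ} (A B C : Finset (Fin n)) : ℕ :=
  (Finset.univ.filter (fun p : Bool × Bool × Bool =>
    p ≠ (false, false, false) ∧ (vennRegion A B C p).Nonempty)).card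

lemma aux_five_le {n : ℕ} (X Y Z : Finset (Fin n))
    (hA : (vennRegion X Y Z (true, true, true)).Nonempty ∨ (vennRegion X Y Z (true, true, false)).Nonempty)
    (hB : (vennRegion X Y Z (true, false, true)).Nonempty ∨ (vennRegion X Y Z (true, false, false)).Nonempty)
    (hC : (vennRegion X Y Z (false, true, true)).Nonempty ∨ (vennRegion X Y Z (false, true, false)).Nonempty)
    (sA sB sC sD : Prop)
    (hsA : sA → (vennRegion X Y Z (true, true, true)).Nonempty ∧ (vennRegion X Y Z (true, true, false)).Nonempty)
    (hsB : sB → (vennRegion X Y Z (true, false, true)).Nonempty ∧ (vennRegion X Y Z (true, false, false)).Nonempty)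
    (hsC : sC → (vennRegion X Y Z (false, true, true)).Nonempty ∧ (vennRegion X Y Z (false, true, false)).Nonempty)
    (hsD : sD → (vennRegion X Y Z (false, false, true)).Nonempty)
    (h2 : (sA ∧ sB) ∨ (sA ∧ sC) ∨ (sA ∧ sD) ∨ (sB ∧ sC) ∨ (sB ∧ sD) ∨ (sC ∧ sD)) :
    5 ≤ innerCount X Y Z := by
  unfold innerCount
  rw [Finset.card_filter]
  simp only [Fintype.sum_prod_type, Fintype.sum_bool, ne_eq, Prod.mk.injEq, not_and, and_true,
    and_false, true_and, false_and, if_false, reduceCtorEq, not_false_eq_true, false_implies,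
    implies_true, add_zero, true_implies, not_true, if_neg, not_true_eq_false]
  rcases h2 with ⟨a, b⟩ | ⟨a, b⟩ | ⟨a, b⟩ | ⟨a, b⟩ | ⟨a, b⟩ | ⟨a, b⟩ <;>
    [(obtain ⟨x1, x2⟩ := hsA a; obtain ⟨x3, x4⟩ := hsB b; rcases hC with x5 | x5);
     (obtain ⟨x1, x2⟩ := hsA a; obtain ⟨x3, x4⟩ := hsC b; rcases hB with x5 | x5);
     (obtain ⟨x1, x2⟩ := hsA a; have x3 := hsD b; rcases hB with x4 | x4 <;> rcases hC with x5 | x5);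
     (obtain ⟨x1, x2⟩ := hsB a; obtain ⟨x3, x4⟩ := hsC b; rcases hA with x5 | x5);
     (obtain ⟨x1, x2⟩ := hsB a; have x3 := hsD b; rcases hA with x4 | x4 <;> rcases hC with x5 | x5);
     (obtain ⟨x1, x2⟩ := hsC a; have x3 := hsD b; rcases hA with x4 | x4 <;> rcases hB with x5 | x5)] <;>
  simp only [if_pos x1, if_pos x2, if_pos x3, if_pos x4, if_pos x5] <;> omega

def PA {n : ℕ} (F₁ F₂ F₃ : Finset (Fin n)) : Prop :=
  (F₃ ∩ (F₁ ∩ F₂)).Nonempty ∧ ((F₁ ∩ F₂) \ F₃).Nonempty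
def PB {n : ℕ} (F₁ F₂ F₃ : Finset (Fin n)) : Prop :=
  (F₃ ∩ (F₁ \ F₂)).Nonempty ∧ ((F₁ \ F₂) \ F₃).Nonempty
def PC {n : ℕ} (F₁ F₂ F₃ : Finset (Fin n)) : Prop :=
  (F₃ ∩ (F₂ \ F₁)).Nonempty ∧ ((F₂ \ F₁) \ F₃).Nonempty
def PD {n : ℕ} (F₁ F₂ F₃ : Finset (Fin n)) : Prop :=
  (F₃ ∩ (F₁ ∪ F₂)ᶜ).Nonempty ∧ ((F₁ ∪ F₂)ᶜ \ F₃).Nonempty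

/-- If `F₁, F₂ ∈ F` form a crossing pair with regions `A, B, C, D` all non-empty, and `F`
contains no three sets with at least five of the seven inner Venn regions non-empty, then
any other set of `F` properly splits at most one of the four regions. -/
theorem stmt_6 (n : ℕ) (F : Finset (Finset (Fin n))) (F₁ F₂ : Finset (Fin n))
    (h₁ : F₁ ∈ F) (h₂ : F₂ ∈ F)
    (A B C D : Finset (Fin n))
    (hA : A = F₁ ∩ F₂) (hB : B = F₁ \ F₂) (hC : C = F₂ \ F₁) (hD : D = (F₁ ∪ F₂)ᶜ)
    (hAne : A.Nonempty) (hBne : B.Nonempty) (hCne : C.Nonempty) (hDne : D.Nonempty)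
    (hno : ¬ ∃ X ∈ F, ∃ Y ∈ F, ∃ Z ∈ F, 5 ≤ innerCount X Y Z) :
    ∀ F₃ ∈ F, F₃ ≠ F₁ → F₃ ≠ F₂ →
      (([A, B, C, D] : List (Finset (Fin n))).countP
        (fun T => decide ((F₃ ∩ T).Nonempty ∧ (T \ F₃).Nonempty))) ≤ 1 := by
  intro F₃ hF₃ _ _
  by_contra hcon
  push_neg at hcon
  subst hA hB hC hD
  apply hno
  refine ⟨F₁, h₁, F₂, h₂, F₃, hF₃, ?_⟩
  have rttt : vennRegion F₁ F₂ F₃ (true, true, true) = F₃ ∩ (F₁ ∩ F₂) := by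
    ext a; simp [vennRegion]; tauto
  have rttf : vennRegion F₁ F₂ F₃ (true, true, false) = (F₁ ∩ F₂) \ F₃ := by
    ext a; simp [vennRegion]; tauto
  have rtft : vennRegion F₁ F₂ F₃ (true, false, true) = F₃ ∩ (F₁ \ F₂) := by
    ext a; simp [vennRegion]; tauto
  have rtff : vennRegion F₁ F₂ F₃ (true, false, false) = (F₁ \ F₂) \ F₃ := by
    ext a; simp [vennRegion]; tauto
  have rftt : vennRegion F₁ F₂ F₃ (false, true, true) = F₃ ∩ (F₂ \ F₁) := by
    ext a; simp [vennRegion]; tauto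
  have rftf : vennRegion F₁ F₂ F₃ (false, true, false) = (F₂ \ F₁) \ F₃ := by
    ext a; simp [vennRegion]; tauto
  have rfft : vennRegion F₁ F₂ F₃ (false, false, true) = F₃ ∩ (F₁ ∪ F₂)ᶜ := by
    ext a; simp [vennRegion]; tauto
  have orA : (vennRegion F₁ F₂ F₃ (true, true, true)).Nonempty ∨
      (vennRegion F₁ F₂ F₃ (true, true, false)).Nonempty := by
    obtain ⟨x, hx⟩ := hAne
    by_cases h : x ∈ F₃
    · exact Or.inl ⟨x, by rw [rttt]; exact Finset.mem_inter.2 ⟨h, hx⟩⟩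
    · exact Or.inr ⟨x, by rw [rttf]; exact Finset.mem_sdiff.2 ⟨hx, h⟩⟩
  have orB : (vennRegion F₁ F₂ F₃ (true, false, true)).Nonempty ∨
      (vennRegion F₁ F₂ F₃ (true, false, false)).Nonempty := by
    obtain ⟨x, hx⟩ := hBne
    by_cases h : x ∈ F₃
    · exact Or.inl ⟨x, by rw [rtft]; exact Finset.mem_inter.2 ⟨h, hx⟩⟩
    · exact Or.inr ⟨x, by rw [rtff]; exact Finset.mem_sdiff.2 ⟨hx, h⟩⟩
  have orC : (vennRegion F₁ F₂ F₃ (false, true, true)).Nonempty ∨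
      (vennRegion F₁ F₂ F₃ (false, true, false)).Nonempty := by
    obtain ⟨x, hx⟩ := hCne
    by_cases h : x ∈ F₃
    · exact Or.inl ⟨x, by rw [rftt]; exact Finset.mem_inter.2 ⟨h, hx⟩⟩
    · exact Or.inr ⟨x, by rw [rftf]; exact Finset.mem_sdiff.2 ⟨hx, h⟩⟩
  simp only [List.countP_cons, List.countP_nil, decide_eq_true_eq] at hcon
  have h2 : (PA F₁ F₂ F₃ ∧ PB F₁ F₂ F₃) ∨ (PA F₁ F₂ F₃ ∧ PC F₁ F₂ F₃) ∨
      (PA F₁ F₂ F₃ ∧ PD F₁ F₂ F₃) ∨ (PB F₁ F₂ F₃ ∧ PC F₁ F₂ F₃) ∨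
      (PB F₁ F₂ F₃ ∧ PD F₁ F₂ F₃) ∨ (PC F₁ F₂ F₃ ∧ PD F₁ F₂ F₃) := by
    by_cases pa : PA F₁ F₂ F₃ <;> by_cases pb : PB F₁ F₂ F₃ <;>
      by_cases pc : PC F₁ F₂ F₃ <;> by_cases pd : PD F₁ F₂ F₃ <;>
      first
      | exact Or.inl ⟨pa, pb⟩
      | exact Or.inr (Or.inl ⟨pa, pc⟩)
      | exact Or.inr (Or.inr (Or.inl ⟨pa, pd⟩))
      | exact Or.inr (Or.inr (Or.inr (Or.inl ⟨pb, pc⟩)))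
      | exact Or.inr (Or.inr (Or.inr (Or.inr (Or.inl ⟨pb, pd⟩))))
      | exact Or.inr (Or.inr (Or.inr (Or.inr (Or.inr ⟨pc, pd⟩))))
      | (exfalso
         simp only [PA, PB, PC, PD] at pa pb pc pd
         simp only [pa, pb, pc, pd, if_true, if_false, ite_true, ite_false, eq_self_iff_true,
           not_true, not_false_iff, and_self, true_and, and_true, false_and, and_false] at hcon
         omega)
  exact aux_five_le F₁ F₂ F₃ orA orB orC (PA F₁ F₂ F₃) (PB F₁ F₂ F₃) (PC F₁ F₂ F₃) (PD F₁ F₂ F₃)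
    (fun h => ⟨by rw [rttt]; exact h.1, by rw [rttf]; exact h.2⟩)
    (fun h => ⟨by rw [rtft]; exact h.1, by rw [rtff]; exact h.2⟩)
    (fun h => ⟨by rw [rftt]; exact h.1, by rw [rftf]; exact h.2⟩)
    (fun h => by rw [rfft]; exact h.1) h2
end

section
/- Suppose F is a family of subsets of [n], x ∈ [n], and G ⊆ F is a family of sets not containing x such that for every G ∈ G both G and G∪{x} lie in F. If G contains sets A, B, C with at least s of the seven inner Venn regions non-empty and with at least one inner region empty, then F contains three sets with at least s+1 of the seven inner Venn regions non-empty. -/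
/-- Boosting with a free element: if `G` consists of sets avoiding `x` with both `G` and
`G ∪ {x}` in `F`, and `G` contains three sets with at least `s` of the seven inner Venn
regions non-empty and some inner region empty, then `F` contains three sets with at least
`s + 1` of the seven inner regions non-empty. -/
theorem stmt_18 (n : ℕ) (F G : Finset (Finset (Fin n))) (x : Fin n) (s : ℕ)
    (hG : ∀ S ∈ G, x ∉ S ∧ S ∈ F ∧ insert x S ∈ F)
    (h : ∃ A ∈ G, ∃ B ∈ G, ∃ C ∈ G, s ≤ innerCount A B C ∧
      ∃ p : Bool × Bool × Bool, p ≠ (false, false, false) ∧ vennRegion A B C p = ∅) :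
    ∃ X ∈ F, ∃ Y ∈ F, ∃ Z ∈ F, s + 1 ≤ innerCount X Y Z := by
  obtain ⟨A, hA, B, hB, C, hC, hs, p, hp, hemp⟩ := h
  obtain ⟨hxA, hAF, hAF'⟩ := hG A hA
  obtain ⟨hxB, hBF, hBF'⟩ := hG B hB
  obtain ⟨hxC, hCF, hCF'⟩ := hG C hC
  obtain ⟨p1, p2, p3⟩ := p
  set X := if p1 then insert x A else A with hX
  set Y := if p2 then insert x B else B with hY
  set Z := if p3 then insert x C else C with hZ
  have hXF : X ∈ F := by cases p1 <;> simp [hX, hAF, hAF']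
  have hYF : Y ∈ F := by cases p2 <;> simp [hY, hBF, hBF']
  have hZF : Z ∈ F := by cases p3 <;> simp [hZ, hCF, hCF']
  refine ⟨X, hXF, Y, hYF, Z, hZF, ?_⟩
  -- elements other than x lie in the same region
  have key : ∀ y : Fin n, y ≠ x → ∀ q : Bool × Bool × Bool,
      (y ∈ vennRegion X Y Z q ↔ y ∈ vennRegion A B C q) := by
    intro y hy q
    obtain ⟨q1, q2, q3⟩ := q
    simp only [vennRegion, Finset.mem_inter, Finset.mem_compl, hX, hY, hZ]
    cases p1 <;> cases p2 <;> cases p3 <;> cases q1 <;> cases q2 <;> cases q3 <;>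
      simp [Finset.mem_insert, hy]
  -- x lies only in the all-false region of A B C
  have hxonly : ∀ q : Bool × Bool × Bool, x ∈ vennRegion A B C q →
      q = (false, false, false) := by
    intro q hq
    obtain ⟨q1, q2, q3⟩ := q
    simp only [vennRegion, Finset.mem_inter, Finset.mem_compl] at hq
    cases q1 <;> cases q2 <;> cases q3 <;> simp_all
  have hxmem : x ∈ vennRegion X Y Z (p1, p2, p3) := by
    simp only [vennRegion, Finset.mem_inter, Finset.mem_compl, hX, hY, hZ]
    cases p1 <;> cases p2 <;> cases p3 <;> simp [hxA, hxB, hxC]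
  have hsub : (Finset.univ.filter (fun q : Bool × Bool × Bool =>
      q ≠ (false, false, false) ∧ (vennRegion A B C q).Nonempty)) ⊂
      (Finset.univ.filter (fun q : Bool × Bool × Bool =>
      q ≠ (false, false, false) ∧ (vennRegion X Y Z q).Nonempty)) := by
    constructor
    · intro q hq
      simp only [Finset.mem_filter, Finset.mem_univ, true_and] at hq ⊢
      obtain ⟨hq1, y, hy⟩ := hq
      have hyx : y ≠ x := fun h => hq1 (hxonly q (h ▸ hy))
      exact ⟨hq1, y, (key y hyx q).mpr hy⟩
    · intro hcon
      have := hcon (Finset.mem_filter.mpr ⟨Finset.mem_univ _, hp, ⟨x, hxmem⟩⟩)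
      simp only [Finset.mem_filter, Finset.mem_univ, true_and] at this
      rw [hemp] at this
      exact absurd this.2 (by simp)
  have := Finset.card_lt_card hsub
  calc s + 1 ≤ innerCount A B C + 1 := by omega
    _ ≤ innerCount X Y Z := by unfold innerCount; omega
end
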